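/- arXiv:2505.06211 — 4 statements merged into one kernel-verified Lean document; each statement's English description precedes it below -/
import Mathlib

section
/- Let W ⊆ T be a finite set of time indices with positive durations d_t > 0, and let e, p̄_t, p_t be real numbers. Then [e − ∑_{t∈W} d_t p_t]^+ ≤ ∑_{t∈W} d_t [ (e − ∑_{t'∈W} d_{t'} p̄_{t'}) / (∑_{t'∈W} d_{t'}) + p̄_t − p_t ]^+. -/
/-- Minimum-energy limit restriction: the aggregate shortfall penalty is bounded
by the sum of per-period penalties centered at a candidate injection `pbar`. -/
theorem energy_min_restriction {ι : Type*} (W : Finset ι) (hW : W.Nonempty)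
    (d pbar p : ι → ℝ) (e : ℝ) (hd : ∀ t ∈ W, 0 < d t) :
    max (e - ∑ t ∈ W, d t * p t) 0 ≤
      ∑ t ∈ W, d t *
        max ((e - ∑ t' ∈ W, d t' * pbar t') / (∑ t' ∈ W, d t') + pbar t - p t) 0 := by
  have hD : (0:ℝ) < ∑ t' ∈ W, d t' := Finset.sum_pos hd hW
  apply max_le
  · have key : (e - ∑ t ∈ W, d t * p t) =
        ∑ t ∈ W, d t * ((e - ∑ t' ∈ W, d t' * pbar t') / (∑ t' ∈ W, d t') + pbar t - p t) := by
      have : ∑ t ∈ W, d t * ((e - ∑ t' ∈ W, d t' * pbar t') / (∑ t' ∈ W, d t') + pbar t - p t)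
          = (∑ t ∈ W, d t) * ((e - ∑ t' ∈ W, d t' * pbar t') / (∑ t' ∈ W, d t'))
            + ∑ t ∈ W, d t * pbar t - ∑ t ∈ W, d t * p t := by
        rw [Finset.sum_mul, ← Finset.sum_add_distrib, ← Finset.sum_sub_distrib]
        congr 1; ext t; ring
      rw [this, mul_div_cancel₀ _ hD.ne']
      ring
    rw [key]
    apply Finset.sum_le_sum
    intro t ht
    exact mul_le_mul_of_nonneg_left (le_max_left _ _) (hd t ht).le
  · apply Finset.sum_nonneg
    intro t ht
    exact mul_nonneg (hd t ht).le (le_max_right _ _)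
end

section
/- Let W ⊆ T be a finite nonempty set with positive durations d_t > 0, and let e, p̄_t, p_t be real numbers. Then [−e + ∑_{t∈W} d_t p_t]^+ ≤ ∑_{t∈W} d_t [ (−e + ∑_{t'∈W} d_{t'} p̄_{t'}) / (∑_{t'∈W} d_{t'}) + p_t − p̄_t ]^+. -/
/-- Maximum-energy limit restriction: the aggregate excess penalty is bounded
by the sum of per-period penalties centered at a candidate injection `pbar`. -/
theorem energy_max_restriction {ι : Type*} (W : Finset ι) (hW : W.Nonempty)
    (d pbar p : ι → ℝ) (e : ℝ) (hd : ∀ t ∈ W, 0 < d t) :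
    max (-e + ∑ t ∈ W, d t * p t) 0 ≤
      ∑ t ∈ W, d t *
        max ((-e + ∑ t' ∈ W, d t' * pbar t') / (∑ t' ∈ W, d t') + p t - pbar t) 0 := by
  have hD : (0:ℝ) < ∑ t' ∈ W, d t' := Finset.sum_pos hd hW
  apply max_le
  · have h1 : (-e + ∑ t ∈ W, d t * p t) =
        ∑ t ∈ W, d t * ((-e + ∑ t' ∈ W, d t' * pbar t') / (∑ t' ∈ W, d t') + p t - pbar t) := by
      have : ∑ t ∈ W, d t * ((-e + ∑ t' ∈ W, d t' * pbar t') / (∑ t' ∈ W, d t') + p t - pbar t)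
          = (∑ t ∈ W, d t) * ((-e + ∑ t' ∈ W, d t' * pbar t') / (∑ t' ∈ W, d t'))
            + ∑ t ∈ W, d t * p t - ∑ t ∈ W, d t * pbar t := by
        rw [Finset.sum_mul]
        simp only [mul_sub, mul_add, Finset.sum_sub_distrib, Finset.sum_add_distrib]
      rw [this, mul_div_cancel₀ _ (ne_of_gt hD)]
      ring
    rw [h1]
    apply Finset.sum_le_sum
    intro t ht
    exact mul_le_mul_of_nonneg_left (le_max_left _ _) (hd t ht).le
  · apply Finset.sum_nonneg
    intro t ht
    exact mul_nonneg (hd t ht).le (le_max_right _ _)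
end

section
/- Let 𝒳 = {x ∈ ℝⁿ : Ax ≤ b} be a polyhedron containing points x* and x̃, and let {x_i} ⊂ 𝒳 be a sequence with x_i → x*. Then there exist nonnegative scalars λ_i such that x̃_i := x_i + λ_i (x̃ − x*) lies in 𝒳 for every i and x̃_i → x̃. -/
open Filter

/-- A convergent sequence in a polyhedron can be translated along the
direction `x̃ − x*` with suitable nonnegative multipliers so as to stay in the
polyhedron while converging to `x̃`. -/
theorem shifted_sequence_in_polyhedron (m n : ℕ)
    (A : Matrix (Fin m) (Fin n) ℝ) (b : Fin m → ℝ)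
    (X : Set (Fin n → ℝ)) (hX : X = {x | ∀ j, A.mulVec x j ≤ b j})
    (xstar xtil : Fin n → ℝ) (hxstar : xstar ∈ X) (hxtil : xtil ∈ X)
    (x : ℕ → (Fin n → ℝ)) (hx : ∀ i, x i ∈ X)
    (hconv : Tendsto x atTop (nhds xstar)) :
    ∃ lam : ℕ → ℝ, (∀ i, 0 ≤ lam i) ∧
      (∀ i, x i + lam i • (xtil - xstar) ∈ X) ∧
      Tendsto (fun i => x i + lam i • (xtil - xstar)) atTop (nhds xtil) := by
  subst hX
  simp only [Set.mem_setOf_eq] at hxstar hxtil hx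
  set d : Fin m → ℝ := fun j => A.mulVec xtil j - A.mulVec xstar j with hd
  set g : Fin m → ℕ → ℝ := fun j i =>
    if 0 < d j then (b j - A.mulVec (x i) j) / d j else 1 with hg
  set S : ℕ → Finset ℝ := fun i =>
    insert (1:ℝ) (Finset.image (fun j => g j i) Finset.univ) with hS
  have hSne : ∀ i, (S i).Nonempty := fun i => ⟨1, Finset.mem_insert_self _ _⟩
  set lam : ℕ → ℝ := fun i => (S i).min' (hSne i) with hlam
  -- membership characterization
  have hmem : ∀ i, ∀ a ∈ S i, a = 1 ∨ ∃ j, a = g j i := by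
    intro i a ha
    rcases Finset.mem_insert.1 ha with h | h
    · exact Or.inl h
    · rcases Finset.mem_image.1 h with ⟨j, _, rfl⟩; exact Or.inr ⟨j, rfl⟩
  have hlam_le_one : ∀ i, lam i ≤ 1 := fun i =>
    Finset.min'_le _ _ (Finset.mem_insert_self _ _)
  have hlam_le_g : ∀ i j, lam i ≤ g j i := fun i j =>
    Finset.min'_le _ _ (Finset.mem_insert_of_mem
      (Finset.mem_image.2 ⟨j, Finset.mem_univ _, rfl⟩))
  have hg_nonneg : ∀ j i, 0 ≤ g j i := by
    intro j i
    simp only [hg]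
    split
    · exact div_nonneg (sub_nonneg.2 (hx i j)) (le_of_lt (by assumption))
    · norm_num
  have hlam_nonneg : ∀ i, 0 ≤ lam i := by
    intro i
    apply Finset.le_min'
    intro a ha
    rcases hmem i a ha with rfl | ⟨j, rfl⟩
    · norm_num
    · exact hg_nonneg j i
  -- linear expansion
  have hexp : ∀ i j, A.mulVec (x i + lam i • (xtil - xstar)) j
      = A.mulVec (x i) j + lam i * d j := by
    intro i j
    rw [Matrix.mulVec_add, Matrix.mulVec_smul, Matrix.mulVec_sub]
    simp [hd, mul_sub]
  have hfeas : ∀ i, ∀ j, A.mulVec (x i + lam i • (xtil - xstar)) j ≤ b j := by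
    intro i j
    rw [hexp i j]
    by_cases hdj : 0 < d j
    · have h1 : lam i ≤ (b j - A.mulVec (x i) j) / d j := by
        have := hlam_le_g i j
        simpa [hg, hdj] using this
      have := (le_div_iff₀ hdj).1 h1
      linarith
    · have : lam i * d j ≤ 0 :=
        mul_nonpos_of_nonneg_of_nonpos (hlam_nonneg i) (not_lt.1 hdj)
      have := hx i j
      linarith
  -- convergence of Ax_i
  have hAcont : ∀ j, Continuous fun v : Fin n → ℝ => A.mulVec v j := by
    intro j
    unfold Matrix.mulVec dotProduct
    exact continuous_finset_sum _ fun k _ => (continuous_const.mul (continuous_apply k))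
  have hAconv : ∀ j, Tendsto (fun i => A.mulVec (x i) j) atTop (nhds (A.mulVec xstar j)) :=
    fun j => ((hAcont j).tendsto _).comp hconv
  -- each g j i tends to a limit ≥ 1
  have hgconv : ∀ j, ∃ L : ℝ, 1 ≤ L ∧ Tendsto (fun i => g j i) atTop (nhds L) := by
    intro j
    by_cases hdj : 0 < d j
    · refine ⟨(b j - A.mulVec xstar j) / d j, ?_, ?_⟩
      · rw [le_div_iff₀ hdj]
        have := hxtil j
        simp only [hd]
        linarith
      · have : Tendsto (fun i => (b j - A.mulVec (x i) j) / d j) atTop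
            (nhds ((b j - A.mulVec xstar j) / d j)) :=
          (tendsto_const_nhds.sub (hAconv j)).div_const _
        simpa [hg, hdj] using this
    · exact ⟨1, le_refl 1, by simpa [hg, hdj] using (tendsto_const_nhds :
        Tendsto (fun _ : ℕ => (1:ℝ)) atTop (nhds 1))⟩
  -- lam tendsto 1
  have hlamconv : Tendsto lam atTop (nhds 1) := by
    rw [Metric.tendsto_atTop]
    intro ε hε
    have hev : ∀ᶠ i in atTop, ∀ j : Fin m, 1 - ε < g j i := by
      rw [eventually_all]
      intro j
      obtain ⟨L, hL1, hLconv⟩ := hgconv j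
      have : 1 - ε < L := by linarith
      exact hLconv.eventually (eventually_gt_nhds this)
    rw [eventually_atTop] at hev
    obtain ⟨N, hN⟩ := hev
    refine ⟨N, fun i hi => ?_⟩
    have hlb : 1 - ε < lam i := by
      apply (Finset.lt_min'_iff _ _).2
      intro a ha
      rcases hmem i a ha with rfl | ⟨j, rfl⟩
      · linarith
      · exact hN i hi j
    have hub := hlam_le_one i
    rw [Real.dist_eq, abs_lt]
    constructor <;> linarith
  refine ⟨lam, hlam_nonneg, fun i j => hfeas i j, ?_⟩
  have : Tendsto (fun i => x i + lam i • (xtil - xstar)) atTop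
      (nhds (xstar + (1:ℝ) • (xtil - xstar))) :=
    hconv.add (hlamconv.smul_const _)
  simpa using this
end

section
/- Let F : ℝⁿ → ℝ be Lipschitz continuous with constant L on a set containing a bounded convex feasible region of diameter D, let E be a matrix with EᵀE = E, and let ρ > 0. Suppose x is a maximizer (or more generally, a KKT/stationary point as in the paper) of x ↦ F(x) − ρ‖E(x − x̄)‖₂² over a polyhedron 𝒳 containing x̄, where the feasible set has diameter at most D. If ∇F ∈ ∂F(x) satisfies the stationarity condition 0 ∈ −(∂F(x) − 2ρE(x − x̄)) + N_𝒳(x), then ‖E(x − x̄)‖₂² ≤ LD/(2ρ). -/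
open scoped RealInnerProductSpace

/-- Penalty bound at a stationary (KKT) point: if a subgradient `gF` of `F`
(bounded in norm by the Lipschitz constant `L` of `F` on the feasible region)
satisfies the stationarity condition
`gF − 2ρ E(x − x̄) ∈ N_𝒳(x)` for the penalized maximization problem over the
polyhedron `𝒳 = {x : ⟪a j, x⟫ ≤ b j ∀ j}` of diameter at most `D`,
then `‖E(x − x̄)‖² ≤ LD/(2ρ)`. -/
theorem stationary_point_penalty_bound (n m : ℕ)
    (E : EuclideanSpace ℝ (Fin n) →L[ℝ] EuclideanSpace ℝ (Fin n))
    (hE : ∀ u v : EuclideanSpace ℝ (Fin n), ⟪E u, E v⟫ = ⟪E u, v⟫)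
    (a : Fin m → EuclideanSpace ℝ (Fin n)) (b : Fin m → ℝ)
    (X : Set (EuclideanSpace ℝ (Fin n))) (hX : X = {z | ∀ j, ⟪a j, z⟫ ≤ b j})
    (L D ρ : ℝ) (hL : 0 ≤ L) (hD : 0 ≤ D) (hρ : 0 < ρ)
    (hdiam : ∀ u ∈ X, ∀ v ∈ X, ‖u - v‖ ≤ D)
    (x xbar : EuclideanSpace ℝ (Fin n)) (hx : x ∈ X) (hxbar : xbar ∈ X)
    (gF : EuclideanSpace ℝ (Fin n)) (hgF : ‖gF‖ ≤ L)
    (hstat : ∀ y ∈ X, ⟪gF - (2 * ρ) • E (x - xbar), y - x⟫ ≤ 0) :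
    ‖E (x - xbar)‖ ^ 2 ≤ L * D / (2 * ρ) := by
  have h := hstat xbar hxbar
  set u := x - xbar with hu
  have hEuu : ⟪E u, u⟫ = ‖E u‖ ^ 2 := by
    rw [← hE u u, real_inner_self_eq_norm_sq]
  have hxy : xbar - x = -u := by simp [hu]
  rw [hxy, inner_neg_right, inner_sub_left, inner_smul_left] at h
  -- h : -(⟪gF, u⟫ - (2*ρ) * ⟪E u, u⟫) ≤ 0
  have h2 : (2 * ρ) * ‖E u‖ ^ 2 ≤ ⟪gF, u⟫ := by
    rw [← hEuu]; simp only [starRingEnd_apply, star_trivial] at h; linarith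
  have h3 : ⟪gF, u⟫ ≤ L * D := by
    calc ⟪gF, u⟫ ≤ ‖gF‖ * ‖u‖ := real_inner_le_norm _ _
      _ ≤ L * D := by
        apply mul_le_mul hgF (hdiam x hx xbar hxbar) (norm_nonneg _) hL
  rw [le_div_iff₀ (by positivity)]
  linarith
end
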